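/- Let A be an associative unital ℚ-algebra which is a division ring with center equal to ℚ and of dimension 9 over ℚ, and let p ≥ 5 be a prime number. Then every nonzero element x ∈ A with x^p lying in the image of the structure map ℚ → A itself lies in the image of ℚ → A. (Equivalently, the group Aˣ/ℚˣ contains no element of order p, i.e., the automorphism group of a non-trivial Severi–Brauer surface over ℚ contains no element of prime order p ≥ 5.) -/

import Mathlib

open Polynomial

lemma aux_deg_norm (A : Type) [DivisionRing A] [Algebra ℚ A] [FiniteDimensional ℚ A]
    (z : A) (m : ℕ) (c : ℚ) (hzc : z ^ m = algebraMap ℚ A c) :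
    (minpoly ℚ z).natDegree ∣ Module.finrank ℚ A ∧
      ∃ N : ℚ, N ^ m = c ^ (minpoly ℚ z).natDegree := by
  have hint : IsIntegral ℚ z := IsIntegral.of_finite ℚ z
  have hirr : Irreducible (minpoly ℚ z) := minpoly.irreducible hint
  haveI : Fact (Irreducible (minpoly ℚ z)) := ⟨hirr⟩
  set K := AdjoinRoot (minpoly ℚ z) with hK
  have hker : ∀ a ∈ Ideal.span {minpoly ℚ z}, (Polynomial.aeval z) a = 0 := by
    intro a ha
    rw [Ideal.mem_span_singleton] at ha
    obtain ⟨q, rfl⟩ := ha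
    rw [map_mul, minpoly.aeval, zero_mul]
  let φ : K →ₐ[ℚ] A := Ideal.Quotient.liftₐ _ (Polynomial.aeval z) hker
  have hinj : Function.Injective φ := φ.toRingHom.injective
  have hroot : φ (AdjoinRoot.root _) = z := by
    show (Polynomial.aeval z) Polynomial.X = z
    simp
  have hfr : Module.finrank ℚ K = (minpoly ℚ z).natDegree := by
    rw [(AdjoinRoot.powerBasis (minpoly.ne_zero hint)).finrank,
      AdjoinRoot.powerBasis_dim]
  letI : Module K A := Module.compHom A (φ.toRingHom : K →+* A)
  have hsmul : ∀ (k : K) (a : A), k • a = φ k * a := fun k a => rfl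
  haveI : IsScalarTower ℚ K A := ⟨fun q k a => by
    rw [hsmul, hsmul, Algebra.smul_def, Algebra.smul_def, map_mul, mul_assoc]
    congr 1
    exact φ.commutes q⟩
  constructor
  · exact ⟨Module.finrank K A, by rw [← hfr]; exact (Module.finrank_mul_finrank ℚ K A).symm⟩
  · refine ⟨Algebra.norm ℚ (AdjoinRoot.root (minpoly ℚ z)), ?_⟩
    have hrm : (AdjoinRoot.root (minpoly ℚ z)) ^ m = algebraMap ℚ K c := by
      apply hinj
      rw [map_pow, hroot, hzc, AlgHom.commutes]
    rw [← map_pow, hrm, Algebra.norm_algebraMap, hfr]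

/-- Let `A` be a central division algebra of dimension `9` over `ℚ` and let `p ≥ 5` be a
prime number. Then every nonzero element `x ∈ A` with `x^p` lying in the image of the
structure map `ℚ → A` itself lies in the image of `ℚ → A`. (Equivalently, the group `Aˣ/ℚˣ`,
i.e. the automorphism group of the non-trivial Severi–Brauer surface corresponding to `A`,
contains no element of prime order `p ≥ 5`.) -/
theorem stmt_12 (A : Type) [DivisionRing A] [Algebra ℚ A]
    (hcenter : Subalgebra.center ℚ A = ⊥) (hrank : Module.finrank ℚ A = 9)
    (p : ℕ) (hp : p.Prime) (hp5 : 5 ≤ p)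
    (x : A) (hx : x ≠ 0) (hxp : x ^ p ∈ Set.range (algebraMap ℚ A)) :
    x ∈ Set.range (algebraMap ℚ A) := by
  haveI : FiniteDimensional ℚ A := Module.finite_of_finrank_pos (by rw [hrank]; norm_num)
  haveI : Fact p.Prime := ⟨hp⟩
  obtain ⟨c, hc⟩ := hxp
  have hc0 : c ≠ 0 := by
    rintro rfl
    exact pow_ne_zero p hx (hc ▸ (map_zero (algebraMap ℚ A)))
  obtain ⟨hdvd, N, hN⟩ := aux_deg_norm A x p c hc.symm
  rw [hrank] at hdvd
  set n := (minpoly ℚ x).natDegree with hn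
  have hN0 : N ≠ 0 := by
    intro h
    apply pow_ne_zero n hc0
    rw [← hN, h, zero_pow hp.ne_zero]
  -- coprimality
  have hcop : IsCoprime (p : ℤ) (n : ℤ) := by
    rw [Int.isCoprime_iff_gcd_eq_one, Int.gcd_natCast_natCast]
    refine hp.coprime_iff_not_dvd.mpr fun hpn => ?_
    have h9 : p ∣ 9 := hpn.trans hdvd
    have h39 : p ∣ 3 ^ 2 := by norm_num [h9]
    have h3 : p ∣ 3 := hp.dvd_of_dvd_pow h39
    have := Nat.le_of_dvd (by norm_num) h3
    omega
  obtain ⟨u, v, huv⟩ := hcop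
  -- build d with d ^ p = c
  set d : ℚ := c ^ u * N ^ v with hd
  have hNz : N ^ (p : ℤ) = c ^ (n : ℤ) := by exact_mod_cast hN
  have hdp : d ^ (p : ℤ) = c :=
    calc (c ^ u * N ^ v) ^ (p : ℤ) = c ^ (u * p) * N ^ (v * p) := by
          rw [mul_zpow, ← zpow_mul, ← zpow_mul]
      _ = c ^ (u * p) * (N ^ (p : ℤ)) ^ v := by rw [← zpow_mul, mul_comm v]
      _ = c ^ (u * p) * c ^ ((n : ℤ) * v) := by rw [hNz, ← zpow_mul]
      _ = c ^ (u * p + n * v) := (zpow_add₀ hc0 _ _).symm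
      _ = c := by
          rw [show u * (p : ℤ) + n * v = u * p + v * n by ring, huv, zpow_one]
  have hdp' : d ^ p = c := by rw [← zpow_natCast d p, hdp]
  have hd0 : d ≠ 0 := by
    intro h; rw [h, zero_pow hp.ne_zero] at hdp'; exact hc0 hdp'.symm
  have hda : algebraMap ℚ A d ≠ 0 := by
    simpa using (map_ne_zero_iff _ (algebraMap ℚ A).injective).mpr hd0
  set y : A := (algebraMap ℚ A d)⁻¹ * x with hy
  have hca : algebraMap ℚ A c ≠ 0 := by
    simpa using (map_ne_zero_iff _ (algebraMap ℚ A).injective).mpr hc0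
  have hyp : y ^ p = 1 := by
    have hcomm : Commute ((algebraMap ℚ A d)) x := Algebra.commutes d x
    rw [hy, hcomm.inv_left₀.mul_pow, ← hc, inv_pow, ← map_pow, hdp',
      inv_mul_cancel₀ hca]
  -- minpoly of y divides X^p - 1
  have hy0 : y ≠ 0 := by
    rw [hy]; exact mul_ne_zero (inv_ne_zero hda) hx
  have hyint : IsIntegral ℚ y := IsIntegral.of_finite ℚ y
  have hq : minpoly ℚ y ∣ (X ^ p - 1 : ℚ[X]) := by
    apply minpoly.dvd
    simp [hyp]
  rw [← Polynomial.cyclotomic_prime_mul_X_sub_one ℚ p] at hq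
  have hqirr : Irreducible (minpoly ℚ y) := minpoly.irreducible hyint
  have hqprime : Prime (minpoly ℚ y) :=
    (UniqueFactorizationMonoid.irreducible_iff_prime).mp hqirr
  rcases hqprime.2.2 _ _ hq with h1 | h2
  · -- cyclotomic case: contradiction
    exfalso
    have hcirr : Irreducible (cyclotomic p ℚ) := cyclotomic.irreducible_rat hp.pos
    have := Polynomial.eq_of_monic_of_associated (minpoly.monic hyint) (cyclotomic.monic p ℚ)
      (associated_of_dvd_dvd h1 (hqirr.dvd_symm hcirr h1))
    obtain ⟨hdvd', _⟩ := aux_deg_norm A y p 1 (by rw [hyp, map_one])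
    rw [hrank, this, natDegree_cyclotomic, Nat.totient_prime hp] at hdvd'
    have h9 : p - 1 ≤ 9 := Nat.le_of_dvd (by norm_num) hdvd'
    have h10 : p ≤ 10 := by omega
    interval_cases p <;> revert hdvd' hp <;> decide
  · -- q = X - 1, so y = 1
    have hX1 : Irreducible (X - 1 : ℚ[X]) := by
      simpa using irreducible_X_sub_C (1 : ℚ)
    have heq : minpoly ℚ y = X - 1 :=
      Polynomial.eq_of_monic_of_associated (minpoly.monic hyint)
        (by simpa using monic_X_sub_C (1 : ℚ))
        (associated_of_dvd_dvd h2 (hqirr.dvd_symm hX1 h2))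
    have : y - 1 = 0 := by
      have := minpoly.aeval ℚ y
      rw [heq] at this
      simpa using this
    have hy1 : y = 1 := sub_eq_zero.mp this
    exact ⟨d, (inv_mul_eq_one₀ hda).mp (hy ▸ hy1)⟩
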